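/- arXiv:2407.04380 — 4 statements merged into one kernel-verified Lean document; each statement's English description precedes it below -/
import Mathlib

section
/- Let 𝒪 be the ring of integers of an imaginary quadratic field K, with unit group 𝒪^×, and fix s ≥ 0, δ > 0, z ∈ ℂ. Let N(z) be the number of pairs (p,q) ∈ 𝒪² with p𝒪 + q𝒪 = 𝒪 such that a(-s)h(z)ᵀ(p,q) ∈ 𝔠(D̄(0,δ)). Then N(z) ≠ |𝒪^×| if and only if there exists (p,q) ∈ 𝒪² with p𝒪 + q𝒪 = 𝒪, p ≠ 0, and e^s/δ ≤ |z - q/p| ≤ e^{s/2}/|p|. -/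
open Pointwise

/-- `ω` is the standard generator of the ring of integers of an imaginary quadratic field:
`ω = i√|D|/2` if the (fundamental) discriminant `D ≡ 0 mod 4`, and `ω = (1+i√|D|)/2` if
`D ≡ 1 mod 4`. -/
def IsImagQuadOmega (ω : ℂ) : Prop :=
  ∃ D : ℤ, D < 0 ∧
    ((Squarefree (D / 4) ∧ (D / 4) % 4 ≠ 1 ∧ D % 4 = 0 ∧
        ω = Complex.I * Real.sqrt |(D : ℝ)| / 2) ∨
      (Squarefree D ∧ D % 4 = 1 ∧
        ω = (1 + Complex.I * Real.sqrt |(D : ℝ)|) / 2))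

/-- `O ⊆ ℂ` is (the image of) the ring of integers `ℤ[ω]` of an imaginary quadratic field. -/
def IsImagQuadRing (O : Subring ℂ) : Prop :=
  ∃ ω : ℂ, IsImagQuadOmega ω ∧ (O : Set ℂ) = {z | ∃ a b : ℤ, z = a + b * ω}

/-- `p` and `q` are coprime in `O`, i.e. `pO + qO = O`. -/
def CoprimeIn (O : Subring ℂ) (p q : ℂ) : Prop :=
  ∃ a ∈ O, ∃ b ∈ O, a * p + b * q = 1

/-- The matrix `h(z) = [[1, z], [0, 1]]`. -/
noncomputable def hMat (z : ℂ) : Matrix (Fin 2) (Fin 2) ℂ := !![1, z; 0, 1]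

/-- The matrix `a(t) = diag(e^{-t/2}, e^{t/2})`. -/
noncomputable def aMat (t : ℝ) : Matrix (Fin 2) (Fin 2) ℂ :=
  !![Complex.exp (-(t : ℂ) / 2), 0; 0, Complex.exp ((t : ℂ) / 2)]

/-- The cone of a subset `A ⊆ ℂ`. -/
def cone (A : Set ℂ) : Set (Fin 2 → ℂ) :=
  {v | v 1 ∈ Metric.closedBall (0 : ℂ) 1 \ {0} ∧ v 0 ∈ v 1 • A}

set_option linter.unnecessarySeqFocus false in
set_option linter.deprecated false in
lemma omega_facts (ω : ℂ) (hω : IsImagQuadOmega ω) :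
    0 < ω.im ∧ ∀ a b : ℤ, ∃ n : ℤ, Complex.normSq ((a:ℂ) + b * ω) = n := by
  obtain ⟨D, hD, hcase⟩ := hω
  have habs : |(D:ℝ)| = -(D:ℝ) := abs_of_neg (by exact_mod_cast hD)
  set c : ℝ := Real.sqrt |(D:ℝ)| with hcdef
  have hc : c^2 = -(D:ℝ) := by rw [hcdef, Real.sq_sqrt (abs_nonneg _), habs]
  have hcpos : 0 < c := Real.sqrt_pos.mpr
    (by rw [habs]; linarith [(show (D:ℝ) < 0 by exact_mod_cast hD)])
  rcases hcase with ⟨_, _, hmod, hωeq⟩ | ⟨_, hmod, hωeq⟩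
  · obtain ⟨k, hk⟩ : ∃ k : ℤ, D = 4 * k := ⟨D / 4, by omega⟩
    have hω2 : ω = ((c/2 : ℝ) : ℂ) * Complex.I := by rw [hωeq]; push_cast; ring
    constructor
    · simp [hω2]; positivity
    · intro a b
      refine ⟨a^2 - b^2 * k, ?_⟩
      have h : (a:ℂ) + b * ω = ((a:ℝ):ℂ) + ((b * (c/2) : ℝ):ℂ) * Complex.I := by
        rw [hω2]; push_cast; ring
      rw [h, Complex.normSq_add_mul_I]
      have hD' : (D:ℝ) = 4*k := by exact_mod_cast hk
      push_cast
      nlinarith [hc, hD']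
  · obtain ⟨k, hk⟩ : ∃ k : ℤ, 1 - D = 4 * k := ⟨(1-D) / 4, by omega⟩
    constructor
    · rw [hωeq]; simp [Complex.div_im, Complex.add_im, Complex.mul_im]; positivity
    · intro a b
      refine ⟨a^2 + a*b + b^2 * k, ?_⟩
      have h : (a:ℂ) + b * ω = ((a + b/2 :ℝ):ℂ) + ((b * (c/2) : ℝ):ℂ) * Complex.I := by
        rw [hωeq]; push_cast; ring
      rw [h, Complex.normSq_add_mul_I]
      have hD' : 1 - (D:ℝ) = 4*k := by exact_mod_cast hk
      push_cast
      nlinarith [hc, hD']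

lemma ring_ball_finite (O : Subring ℂ) (ω : ℂ) (hωim : 0 < ω.im)
    (hmem : (O : Set ℂ) = {z | ∃ a b : ℤ, z = a + b * ω}) (R : ℝ) :
    {x : ℂ | x ∈ O ∧ ‖x‖ ≤ R}.Finite := by
  set N : ℤ := max ⌈R / ω.im⌉ ⌈R + (R / ω.im) * ‖ω‖⌉ with hN
  apply Set.Finite.subset (Set.Finite.image (fun ab : ℤ × ℤ => (ab.1:ℂ) + ab.2 * ω)
    ((Set.finite_Icc (-N) N).prod (Set.finite_Icc (-N) N)))
  rintro x ⟨hxO, hxR⟩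
  have hx : x ∈ (O : Set ℂ) := hxO
  rw [hmem] at hx
  obtain ⟨a, b, rfl⟩ := hx
  have him : ((a:ℂ) + b*ω).im = b * ω.im := by simp
  have hb0 : |(b:ℝ)| * ω.im ≤ R := by
    have h := Complex.abs_im_le_norm ((a:ℂ) + b*ω)
    rw [him, abs_mul, abs_of_pos hωim] at h
    linarith
  have hbR : |(b:ℝ)| ≤ R / ω.im := (le_div_iff₀ hωim).mpr hb0
  have haR : |(a:ℝ)| ≤ R + (R/ω.im) * ‖ω‖ := by
    have h1 : ‖(a:ℂ)‖ ≤ ‖(a:ℂ)+b*ω‖ + ‖(b:ℂ)*ω‖ := by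
      calc ‖(a:ℂ)‖ = ‖((a:ℂ)+b*ω) - (b:ℂ)*ω‖ := by ring_nf
        _ ≤ _ := (norm_sub_le _ _).trans (le_refl _)
    have h2 : ‖(b:ℂ)*ω‖ ≤ (R/ω.im) * ‖ω‖ := by
      rw [norm_mul]
      have hb' : ‖(b:ℂ)‖ = |(b:ℝ)| := by
        rw [show ((b:ℂ)) = (((b:ℝ)):ℂ) by push_cast; rfl, Complex.norm_real, Real.norm_eq_abs]
      rw [hb']
      exact mul_le_mul_of_nonneg_right hbR (norm_nonneg _)
    have h3 : ‖(a:ℂ)‖ = |(a:ℝ)| := by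
      rw [show ((a:ℂ)) = (((a:ℝ)):ℂ) by push_cast; rfl, Complex.norm_real, Real.norm_eq_abs]
    rw [h3] at h1
    linarith
  refine ⟨(a, b), ⟨?_, ?_⟩, rfl⟩
  · rw [Set.mem_Icc]
    have h : |(a:ℝ)| ≤ (N:ℝ) :=
      haR.trans ((Int.le_ceil _).trans (by exact_mod_cast le_max_right _ _))
    rw [← Int.cast_abs] at h
    have := (Int.cast_le (R := ℝ)).mp h
    exact abs_le.mp this
  · rw [Set.mem_Icc]
    have h : |(b:ℝ)| ≤ (N:ℝ) :=
      hbR.trans ((Int.le_ceil _).trans (by exact_mod_cast le_max_left _ _))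
    rw [← Int.cast_abs] at h
    have := (Int.cast_le (R := ℝ)).mp h
    exact abs_le.mp this

lemma unit_abs_one (O : Subring ℂ) (hnorm : ∀ x ∈ O, ∃ n : ℤ, Complex.normSq x = n)
    (u v : ℂ) (hu : u ∈ O) (hv : v ∈ O) (huv : u * v = 1) : ‖u‖ = 1 := by
  obtain ⟨n, hn⟩ := hnorm u hu
  obtain ⟨m, hm⟩ := hnorm v hv
  have h1 : (n:ℝ) * m = 1 := by
    rw [← hn, ← hm, ← Complex.normSq_mul, huv, Complex.normSq_one]
  have h2 : n * m = 1 := by exact_mod_cast h1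
  have hn0 : (0:ℝ) ≤ (n:ℝ) := hn ▸ Complex.normSq_nonneg u
  have hn0' : 0 ≤ n := by exact_mod_cast hn0
  have hne : n = 1 := by
    rcases Int.isUnit_iff.mp (IsUnit.of_mul_eq_one _ h2) with h | h
    · exact h
    · omega
  have h3 : Complex.normSq u = 1 := by rw [hn, hne]; norm_num
  rw [Complex.norm_def, h3, Real.sqrt_one]

lemma mulVec_eq (s : ℝ) (z p q : ℂ) :
    (aMat (-s) * (hMat z).transpose).mulVec ![p, q] =
      ![Complex.exp ((s:ℂ)/2) * p, Complex.exp (-(s:ℂ)/2) * (z * p + q)] := by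
  have ht : (hMat z).transpose = !![1, 0; z, 1] := by
    ext i j; fin_cases i <;> fin_cases j <;> simp [hMat]
  rw [ht]
  funext i
  fin_cases i <;>
    simp [aMat, Matrix.mulVec, Matrix.mul_apply, dotProduct, Fin.sum_univ_two,
      Complex.ofReal_neg, neg_neg] <;> ring

lemma mem_cone_iff (δ : ℝ) (x y : ℂ) :
    ![x, y] ∈ cone (Metric.closedBall 0 δ) ↔
      ‖y‖ ≤ 1 ∧ y ≠ 0 ∧ ‖x‖ ≤ ‖y‖ * δ := by
  have habs : ∀ w : ℂ, ‖w‖ = ‖w‖ := fun w => rfl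
  constructor
  · rintro ⟨⟨hy1, hy0⟩, hx⟩
    simp only [Matrix.cons_val_one, Matrix.head_cons, Matrix.cons_val_zero,
      Metric.mem_closedBall, dist_zero_right, Set.mem_singleton_iff] at hy1 hy0 hx
    have hy0' : y ≠ 0 := hy0
    refine ⟨by rw [← habs]; exact hy1, hy0', ?_⟩
    rw [Set.mem_smul_set_iff_inv_smul_mem₀ hy0'] at hx
    simp only [smul_eq_mul, Metric.mem_closedBall, dist_zero_right, norm_mul, norm_inv] at hx
    have hypos : 0 < ‖y‖ := norm_pos_iff.mpr hy0'
    rw [inv_mul_le_iff₀ hypos] at hx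
    rw [← habs, ← habs]
    linarith [hx]
  · rintro ⟨hy1, hy0, hx⟩
    have hypos : 0 < ‖y‖ := norm_pos_iff.mpr hy0
    refine ⟨⟨?_, ?_⟩, ?_⟩
    · simp only [Matrix.cons_val_one, Matrix.head_cons, Metric.mem_closedBall,
        dist_zero_right]
      rw [habs]; exact hy1
    · simp only [Matrix.cons_val_one, Matrix.head_cons, Set.mem_singleton_iff]
      exact hy0
    · simp only [Matrix.cons_val_zero, Matrix.cons_val_one, Matrix.head_cons]
      rw [Set.mem_smul_set_iff_inv_smul_mem₀ hy0]
      simp only [smul_eq_mul, Metric.mem_closedBall, dist_zero_right, norm_mul, norm_inv]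
      rw [inv_mul_le_iff₀ hypos, habs, habs]
      exact hx

/-- The number `N(z)` of coprime pairs `(p,q) ∈ O²` with `a(-s) h(z)ᵀ (p,q) ∈ 𝔠(D̄(0,δ))`
differs from `|O^×|` iff there is a coprime pair `(p,q)` with `p ≠ 0` and
`e^s/δ ≤ |z - q/p| ≤ e^{s/2}/|p|`. -/
theorem stmt_5 (O : Subring ℂ) (hO : IsImagQuadRing O) (s δ : ℝ) (hs : 0 ≤ s) (hδ : 0 < δ)
    (z : ℂ) :
    (Set.ncard {pq : ℂ × ℂ | pq.1 ∈ O ∧ pq.2 ∈ O ∧ CoprimeIn O pq.1 pq.2 ∧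
          (aMat (-s) * (hMat z).transpose).mulVec ![pq.1, pq.2] ∈
            cone (Metric.closedBall (0 : ℂ) δ)} ≠
        Set.ncard {u : ℂ | u ∈ O ∧ ∃ v ∈ O, u * v = 1}) ↔
      ∃ p q : ℂ, p ∈ O ∧ q ∈ O ∧ CoprimeIn O p q ∧ p ≠ 0 ∧
        Real.exp s / δ ≤ ‖z - q / p‖ ∧
        ‖z - q / p‖ ≤ Real.exp (s / 2) / ‖p‖ := by
  obtain ⟨ω, hω, hmem⟩ := hO
  obtain ⟨hωim, hnormω⟩ := omega_facts ω hω
  have hnorm : ∀ x ∈ O, ∃ n : ℤ, Complex.normSq x = n := by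
    intro x hx
    have h : x ∈ (O:Set ℂ) := hx
    rw [hmem] at h; obtain ⟨a,b,rfl⟩ := h; exact hnormω a b
  set U := {u : ℂ | u ∈ O ∧ ∃ v ∈ O, u * v = 1} with hU
  set S := {pq : ℂ × ℂ | pq.1 ∈ O ∧ pq.2 ∈ O ∧ CoprimeIn O pq.1 pq.2 ∧
          (aMat (-s) * (hMat z).transpose).mulVec ![pq.1, pq.2] ∈
            cone (Metric.closedBall (0 : ℂ) δ)} with hS
  -- exponential facts
  have hE1 : (0:ℝ) < Real.exp (s/2) := Real.exp_pos _
  have hE2 : (0:ℝ) < Real.exp (-s/2) := Real.exp_pos _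
  have hE3 : Real.exp (-s/2) * Real.exp (s/2) = 1 := by
    rw [← Real.exp_add, show (-s/2 + s/2 : ℝ) = 0 by ring, Real.exp_zero]
  have hE4 : Real.exp (s/2) * Real.exp (s/2) = Real.exp s := by
    rw [← Real.exp_add, show (s/2 + s/2 : ℝ) = s by ring]
  have hE7 : Real.exp (-s/2) * Real.exp s = Real.exp (s/2) := by
    rw [← Real.exp_add, show (-s/2 + s : ℝ) = s/2 by ring]
  have hE5 : Real.exp (-s/2) ≤ 1 := Real.exp_le_one_iff.mpr (by linarith)
  have hE6 : (1:ℝ) ≤ Real.exp (s/2) := Real.one_le_exp_iff.mpr (by linarith)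
  have exps : ‖Complex.exp ((s:ℂ)/2)‖ = Real.exp (s/2) := by
    rw [Complex.norm_exp]; norm_num
  have expns : ‖Complex.exp (-(s:ℂ)/2)‖ = Real.exp (-s/2) := by
    rw [Complex.norm_exp]; norm_num
  -- membership in S
  have hSmem : ∀ p q : ℂ, (p,q) ∈ S ↔ p ∈ O ∧ q ∈ O ∧ CoprimeIn O p q ∧
      Real.exp (-s/2) * ‖z*p+q‖ ≤ 1 ∧ z*p+q ≠ 0 ∧
      Real.exp (s/2) * ‖p‖ ≤ (Real.exp (-s/2) * ‖z*p+q‖) * δ := by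
    intro p q
    rw [hS]
    simp only [Set.mem_setOf_eq]
    rw [mulVec_eq, mem_cone_iff]
    constructor
    · rintro ⟨h1,h2,h3,h4,h5,h6⟩
      rw [norm_mul, expns] at h4
      rw [norm_mul, norm_mul, expns, exps] at h6
      refine ⟨h1,h2,h3,h4, fun h => h5 (by rw [h, mul_zero]), h6⟩
    · rintro ⟨h1,h2,h3,h4,h5,h6⟩
      refine ⟨h1,h2,h3, ?_, ?_, ?_⟩
      · rw [norm_mul, expns]; exact h4
      · exact mul_ne_zero (Complex.exp_ne_zero _) h5
      · rw [norm_mul, norm_mul, expns, exps]; exact h6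
  -- S is finite
  have hSfin : S.Finite := by
    apply Set.Finite.subset
      (Set.Finite.prod (ring_ball_finite O ω hωim hmem δ)
        (ring_ball_finite O ω hωim hmem (Real.exp (s/2) + ‖z‖ * δ)))
    rintro ⟨p,q⟩ hpq
    rw [hSmem] at hpq
    obtain ⟨hp,hq,_,h4,h5,h6⟩ := hpq
    have hA : ‖z*p+q‖ ≤ Real.exp (s/2) := by nlinarith
    have hpb : ‖p‖ ≤ δ := by nlinarith [norm_nonneg p]
    constructor
    · exact ⟨hp, hpb⟩
    · refine ⟨hq, ?_⟩
      have h1 : ‖q‖ ≤ ‖z*p+q‖ + ‖z*p‖ := by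
        calc ‖q‖ = ‖(z*p+q) - z*p‖ := by ring_nf
          _ ≤ _ := norm_sub_le _ _
      rw [norm_mul] at h1
      nlinarith [norm_nonneg z, norm_nonneg p]
  -- units facts
  have hUabs : ∀ u ∈ U, ‖u‖ = 1 := by
    rintro u ⟨hu, v, hv, huv⟩
    exact unit_abs_one O hnorm u v hu hv huv
  -- trivial solutions
  have hT : ∀ u ∈ U, ((0:ℂ), u) ∈ S := by
    intro u hu
    obtain ⟨huO, v, hv, huv⟩ := hu
    have habs1 : ‖u‖ = 1 := hUabs u ⟨huO, v, hv, huv⟩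
    rw [hSmem]
    refine ⟨O.zero_mem, huO,
      ⟨0, O.zero_mem, v, hv, by rw [mul_zero, zero_add, mul_comm]; exact huv⟩, ?_, ?_, ?_⟩
    · rw [mul_zero, zero_add, habs1, mul_one]; exact hE5
    · rw [mul_zero, zero_add]
      intro h; rw [h] at habs1; simp at habs1
    · rw [mul_zero, zero_add, habs1, mul_one]
      simp only [norm_zero, mul_zero]
      positivity
  have hT' : ∀ q : ℂ, ((0:ℂ), q) ∈ S → q ∈ U := by
    intro q hq
    rw [hSmem] at hq
    obtain ⟨_, hqO, ⟨a, ha, b, hb, hab⟩, _⟩ := hq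
    rw [mul_zero, zero_add] at hab
    exact ⟨hqO, b, hb, by rw [mul_comm]; exact hab⟩
  -- bridge between nontrivial solutions and the RHS conditions
  have bridge : ∀ p q : ℂ, p ≠ 0 →
      ((Real.exp (-s/2) * ‖z*p+q‖ ≤ 1 ∧ z*p+q ≠ 0 ∧
        Real.exp (s/2) * ‖p‖ ≤ (Real.exp (-s/2) * ‖z*p+q‖) * δ) ↔
       (Real.exp s / δ ≤ ‖z + q / p‖ ∧
        ‖z + q / p‖ ≤ Real.exp (s/2) / ‖p‖)) := by
    intro p q hp0
    have hP : (0:ℝ) < ‖p‖ := by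
      simpa using norm_pos_iff.mpr hp0
    have hzq : z + q/p = (z*p+q)/p := by field_simp
    rw [hzq, norm_div]
    set A := ‖z*p+q‖ with hA
    set P := ‖p‖ with hPd
    have hAnn : 0 ≤ A := norm_nonneg _
    constructor
    · rintro ⟨h4, h5, h6⟩
      have hAle : A ≤ Real.exp (s/2) := by
        calc A = (Real.exp (-s/2) * Real.exp (s/2)) * A := by rw [hE3, one_mul]
          _ = Real.exp (s/2) * (Real.exp (-s/2) * A) := by ring
          _ ≤ Real.exp (s/2) * 1 := mul_le_mul_of_nonneg_left h4 hE1.le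
          _ = Real.exp (s/2) := mul_one _
      have key : Real.exp s * P ≤ A * δ := by
        calc Real.exp s * P = Real.exp (s/2) * (Real.exp (s/2) * P) := by
              rw [← mul_assoc, hE4]
          _ ≤ Real.exp (s/2) * (Real.exp (-s/2) * A * δ) :=
              mul_le_mul_of_nonneg_left h6 hE1.le
          _ = (Real.exp (-s/2) * Real.exp (s/2)) * (A * δ) := by ring
          _ = A * δ := by rw [hE3, one_mul]
      constructor
      · rw [div_le_div_iff₀ hδ hP]
        exact key
      · rw [div_le_div_iff₀ hP hP]
        exact mul_le_mul_of_nonneg_right hAle hP.le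
    · rintro ⟨h7, h8⟩
      have hApos : 0 < A := by
        by_contra hcon
        push_neg at hcon
        have hA0 : A = 0 := le_antisymm hcon hAnn
        rw [hA0] at h7
        have hpos : (0:ℝ) < Real.exp s / δ := by positivity
        simp only [zero_div] at h7
        linarith
      have h8' : A ≤ Real.exp (s/2) := by
        rw [div_le_div_iff₀ hP hP] at h8
        exact le_of_mul_le_mul_right h8 hP
      have h7' : Real.exp s * P ≤ A * δ := by
        rw [div_le_div_iff₀ hδ hP] at h7
        exact h7
      refine ⟨?_, ?_, ?_⟩
      · exact (mul_le_mul_of_nonneg_left h8' hE2.le).trans (le_of_eq hE3)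
      · intro h
        rw [hA, h, norm_zero] at hApos
        exact lt_irrefl _ hApos
      · calc Real.exp (s/2) * P = (Real.exp (-s/2) * Real.exp s) * P := by rw [hE7]
          _ = Real.exp (-s/2) * (Real.exp s * P) := by ring
          _ ≤ Real.exp (-s/2) * (A * δ) := mul_le_mul_of_nonneg_left h7' hE2.le
          _ = Real.exp (-s/2) * A * δ := by ring
  have inj : Function.Injective (fun u : ℂ => ((0:ℂ), u)) := fun a b h => by
    simpa using congrArg Prod.snd h
  constructor
  · intro hne
    by_contra hcon
    push_neg at hcon
    apply hne
    have hST : S = (fun u : ℂ => ((0:ℂ), u)) '' U := by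
      apply Set.Subset.antisymm
      · rintro ⟨p,q⟩ hpq
        by_cases hp : p = 0
        · subst hp
          exact ⟨q, hT' q hpq, rfl⟩
        · exfalso
          obtain ⟨h1, h2, h3, hnum⟩ := (hSmem p q).mp hpq
          have hb := (bridge p q hp).mp hnum
          have hcop' : CoprimeIn O p (-q) := by
            obtain ⟨a, ha, b, hb', hab⟩ := h3
            exact ⟨a, ha, -b, O.neg_mem hb', by rw [← hab]; ring⟩
          have heq : z - (-q)/p = z + q/p := by ring
          have hc := hcon p (-q) h1 (O.neg_mem h2) hcop' hp
          rw [heq] at hc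
          exact lt_irrefl _ (lt_of_le_of_lt hb.2 (hc hb.1))
      · rintro _ ⟨u, hu, rfl⟩
        exact hT u hu
    rw [hST, Set.ncard_image_of_injective _ inj]
  · rintro ⟨p, q', hp, hq', hcop, hp0, h1, h2⟩
    have hq : -q' ∈ O := O.neg_mem hq'
    have hcop' : CoprimeIn O p (-q') := by
      obtain ⟨a, ha, b, hb', hab⟩ := hcop
      exact ⟨a, ha, -b, O.neg_mem hb', by rw [← hab]; ring⟩
    have heq : z + (-q')/p = z - q'/p := by ring
    have hmemS : (p, -q') ∈ S := by
      rw [hSmem]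
      refine ⟨hp, hq, hcop', ?_⟩
      apply (bridge p (-q') hp0).mpr
      rw [heq]
      exact ⟨h1, h2⟩
    have hTsub : (fun u : ℂ => ((0:ℂ), u)) '' U ⊆ S := by
      rintro _ ⟨u, hu, rfl⟩; exact hT u hu
    have hnot : (p, -q') ∉ (fun u : ℂ => ((0:ℂ), u)) '' U := by
      rintro ⟨u, hu, h⟩
      exact hp0 ((Prod.ext_iff.mp h).1.symm)
    have hlt : Set.ncard ((fun u : ℂ => ((0:ℂ), u)) '' U) < Set.ncard S :=
      Set.ncard_lt_ncard ((Set.ssubset_iff_of_subset hTsub).mpr ⟨_, hmemS, hnot⟩) hSfin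
    rw [Set.ncard_image_of_injective _ inj] at hlt
    exact (ne_of_lt hlt).symm
end

section
/- Let ω ∈ ℂ with positive imaginary part, and set L = 𝒪 = ℤ + ℤω (a lattice in ℂ). If R - r ≥ |ω| with 0 ≤ r < R, then the closed annulus A(0, r, R) = {z ∈ ℂ : r ≤ |z| ≤ R} projects onto the whole torus ℂ/L under the canonical projection; i.e., A(0,r,R) + L = ℂ. -/
open Pointwise

lemma omega_facts' (ω : ℂ) (hω : IsImagQuadOmega ω) : 0 < ω.im ∧ 1 ≤ ‖ω‖ := by
  obtain ⟨D, hD, h⟩ := hω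
  rcases h with ⟨-, -, hmod, rfl⟩ | ⟨-, hmod, rfl⟩
  · have hD4 : (4:ℝ) ≤ |(D:ℝ)| := by
      have h1 : D ≤ -4 := by omega
      rw [abs_of_neg (by exact_mod_cast hD)]
      have : (D:ℝ) ≤ -4 := by exact_mod_cast h1
      linarith
    have hs : Real.sqrt |(D:ℝ)| ≥ 2 := by
      nlinarith [Real.sq_sqrt (abs_nonneg (D:ℝ)), Real.sqrt_nonneg |(D:ℝ)|]
    constructor
    · simp only [Complex.div_im, Complex.mul_im, Complex.I_re, Complex.ofReal_im,
        Complex.I_im, Complex.ofReal_re]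
      simp
      linarith
    · rw [show ‖Complex.I * Real.sqrt |(D : ℝ)| / 2‖ = Real.sqrt |(D:ℝ)| / 2 by
        simp [map_div₀, Complex.norm_real, abs_of_nonneg (Real.sqrt_nonneg _)]]
      linarith
  · have hD3 : (3:ℝ) ≤ |(D:ℝ)| := by
      have h1 : D ≤ -3 := by omega
      rw [abs_of_neg (by exact_mod_cast hD)]
      have : (D:ℝ) ≤ -3 := by exact_mod_cast h1
      linarith
    have hs2 : Real.sqrt |(D:ℝ)| ^ 2 = |(D:ℝ)| := Real.sq_sqrt (abs_nonneg _)
    have hs0 : 0 ≤ Real.sqrt |(D:ℝ)| := Real.sqrt_nonneg _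
    have hspos : 0 < Real.sqrt |(D:ℝ)| := by nlinarith
    constructor
    · rw [show ((1 + Complex.I * Real.sqrt |(D : ℝ)|) / 2 : ℂ).im = Real.sqrt |(D:ℝ)| / 2 by simp]
      linarith
    · set z : ℂ := (1 + Complex.I * Real.sqrt |(D : ℝ)|) / 2 with hz
      have hre : z.re = 1/2 := by simp [hz]
      have him : z.im = Real.sqrt |(D:ℝ)| / 2 := by simp [hz]
      have hsq : ‖z‖ ^ 2 = z.re ^ 2 + z.im ^ 2 := by
        rw [Complex.sq_norm, Complex.normSq_apply]; ring
      nlinarith [norm_nonneg z]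

lemma annulus_main' (ω : ℂ) (him : 0 < ω.im) (habs : 1 ≤ ‖ω‖)
    (r R : ℝ) (hr : 0 ≤ r) (hrR : r < R) (hgap : ‖ω‖ ≤ R - r) :
    {z : ℂ | r ≤ ‖z‖ ∧ ‖z‖ ≤ R} +
        {z : ℂ | ∃ a b : ℤ, z = a + b * ω} = Set.univ := by
  classical
  have hR1 : 1 ≤ R := by linarith
  ext w
  simp only [Set.mem_univ, iff_true]
  rw [Set.mem_add]
  set b : ℤ := round (w.im / ω.im) with hbdef
  set w' : ℂ := w - b * ω with hw'def
  have hwim : |w'.im| ≤ ω.im / 2 := by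
    have h1 : |w.im / ω.im - b| ≤ 1/2 := abs_sub_round _
    have h2 : w'.im = (w.im / ω.im - b) * ω.im := by
      field_simp [hw'def]; rw [hw'def, Complex.sub_im, Complex.mul_im, Complex.intCast_re, Complex.intCast_im]; ring
    rw [h2, abs_mul, abs_of_pos him]
    calc |w.im / ω.im - ↑b| * ω.im ≤ (1/2) * ω.im := by
          apply mul_le_mul_of_nonneg_right h1 him.le
      _ = ω.im / 2 := by ring
  set f : ℤ → ℝ := fun a => ‖w' - a‖ with hfdef
  set a₀ : ℤ := round w'.re with ha₀def
  have himle : ω.im ≤ ‖ω‖ := Complex.im_le_norm ω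
  have homR : ω.im ≤ R := by linarith
  have h0 : f a₀ ≤ R := by
    have hre := abs_le.mp (abs_sub_round w'.re)
    have hwim' := abs_le.mp hwim
    have hsq : f a₀ ^ 2 = (w'.re - a₀) ^ 2 + w'.im ^ 2 := by
      simp only [hfdef, Complex.sq_norm, Complex.normSq_apply, Complex.sub_re,
        Complex.sub_im, Complex.intCast_re, Complex.intCast_im]
      ring
    have h1 : 0 ≤ f a₀ := norm_nonneg _
    nlinarith [hsq, hre.1, hre.2, hwim'.1, hwim'.2]
  have hstep : ∀ a : ℤ, f (a + 1) ≤ f a + 1 := by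
    intro a
    have heq : (w' - (↑(a+1) : ℂ)) = (w' - a) + (-1) := by push_cast; ring
    simp only [hfdef]
    rw [heq]
    calc ‖(w' - a) + (-1)‖ ≤ ‖w' - a‖ + ‖(-1 : ℂ)‖ :=
          norm_add_le _ _
      _ = ‖w' - a‖ + 1 := by simp
  have hex : ∃ k : ℕ, r ≤ f (a₀ + k) := by
    refine ⟨⌈r + R⌉₊, ?_⟩
    have hk : r + R ≤ (⌈r + R⌉₊ : ℝ) := Nat.le_ceil _
    have h2 := norm_sub_le (w' - (a₀ : ℂ))
      (w' - ((a₀ + (⌈r + R⌉₊ : ℕ) : ℤ) : ℂ))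
    have h3 : (w' - (a₀ : ℂ)) - (w' - ((a₀ + (⌈r + R⌉₊ : ℕ) : ℤ) : ℂ))
        = ((⌈r + R⌉₊ : ℕ) : ℂ) := by push_cast; ring
    rw [h3, Complex.norm_natCast] at h2
    simp only [hfdef] at h0 ⊢
    linarith
  set k₀ : ℕ := Nat.find hex with hk₀def
  have hsp : r ≤ f (a₀ + k₀) := Nat.find_spec hex
  have hup : f (a₀ + k₀) ≤ R := by
    rcases Nat.eq_zero_or_pos k₀ with h | h
    · rw [h]; simpa using h0
    · have hm : ¬ r ≤ f (a₀ + (k₀ - 1 : ℕ)) := Nat.find_min hex (by omega)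
      push_neg at hm
      have heq : (a₀ + (k₀ : ℤ)) = (a₀ + ((k₀ - 1 : ℕ) : ℤ)) + 1 := by
        have : ((k₀ - 1 : ℕ) : ℤ) = (k₀ : ℤ) - 1 := by omega
        rw [this]; ring
      rw [heq]
      calc f ((a₀ + ((k₀ - 1 : ℕ) : ℤ)) + 1) ≤ f (a₀ + ((k₀ - 1 : ℕ) : ℤ)) + 1 := hstep _
        _ ≤ r + 1 := by linarith
        _ ≤ R := by linarith
  refine ⟨w' - ((a₀ + (k₀ : ℕ) : ℤ) : ℂ), ⟨hsp, hup⟩, ((a₀ + (k₀ : ℕ) : ℤ) : ℂ) + b * ω,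
    ⟨a₀ + k₀, b, rfl⟩, ?_⟩
  rw [hw'def]; ring

/-- If `ω` is the standard generator of the ring of integers of an imaginary quadratic field
and `0 ≤ r < R` with `R - r ≥ |ω|`, then the closed annulus `A(0,r,R)` projects onto the
whole torus `ℂ/(ℤ + ℤω)`, i.e. `A(0,r,R) + (ℤ + ℤω) = ℂ`. -/
theorem stmt_6 (ω : ℂ) (hω : IsImagQuadOmega ω) (r R : ℝ) (hr : 0 ≤ r) (hrR : r < R)
    (hgap : ‖ω‖ ≤ R - r) :
    {z : ℂ | r ≤ ‖z‖ ∧ ‖z‖ ≤ R} +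
        {z : ℂ | ∃ a b : ℤ, z = a + b * ω} = Set.univ := by
  obtain ⟨him, habs⟩ := omega_facts' ω hω
  exact annulus_main' ω him habs r R hr hrR hgap
end

section
/- Let 𝒪 be the ring of integers of an imaginary quadratic field K, written 𝒪 = ℤ[ω] with ω = i√|D|/2 or (1+i√|D|)/2. Define c = min{|z| : z ∈ 𝒪, |z| > 1}. If s ≥ 2 ln(|1+ω|·c/(c-1)), then for every (p,q) ∈ 𝒪² with p ≠ 0 and every δ > 0, the annulus A(q/p, e^s/δ, e^{s/2}/|p|) is contained in the union of translates A(q', e^s/δ, e^{s/2}) + 𝒪 over q' ∈ 𝒪; that is, the projection of A(q/p, e^s/δ, e^{s/2}/|p|) to ℂ/𝒪 is contained in the projection of A(0, e^s/δ, e^{s/2}). -/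
lemma omegaFacts {ω : ℂ} (hω : IsImagQuadOmega ω) :
    0 < ω.im ∧ ((ω.re = 0 ∧ 1 ≤ ω.im ^ 2) ∨ (ω.re = 1/2 ∧ 3/4 ≤ ω.im ^ 2)) := by
  obtain ⟨D, hD, h⟩ := hω
  rcases h with ⟨-, -, hmod, hωeq⟩ | ⟨-, hmod, hωeq⟩
  · have h4 : D ≤ -4 := by omega
    have habs : (4:ℝ) ≤ |(D:ℝ)| := by
      rw [abs_of_nonpos (by exact_mod_cast hD.le)]
      have : (D:ℝ) ≤ -4 := by exact_mod_cast h4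
      linarith
    have hre : ω.re = 0 := by rw [hωeq]; simp
    have him : ω.im = Real.sqrt |(D:ℝ)| / 2 := by rw [hωeq]; simp
    have hsq : ω.im ^ 2 = |(D:ℝ)| / 4 := by
      rw [him, div_pow, Real.sq_sqrt (abs_nonneg _)]; norm_num
    refine ⟨?_, Or.inl ⟨hre, by rw [hsq]; linarith⟩⟩
    rw [him]
    have : 0 < Real.sqrt |(D:ℝ)| := Real.sqrt_pos.2 (by linarith)
    linarith
  · have h3 : D ≤ -3 := by omega
    have habs : (3:ℝ) ≤ |(D:ℝ)| := by
      rw [abs_of_nonpos (by exact_mod_cast hD.le)]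
      have : (D:ℝ) ≤ -3 := by exact_mod_cast h3
      linarith
    have hre : ω.re = 1/2 := by rw [hωeq]; simp
    have him : ω.im = Real.sqrt |(D:ℝ)| / 2 := by rw [hωeq]; simp
    have hsq : ω.im ^ 2 = |(D:ℝ)| / 4 := by
      rw [him, div_pow, Real.sq_sqrt (abs_nonneg _)]; norm_num
    refine ⟨?_, Or.inr ⟨hre, by rw [hsq]; linarith⟩⟩
    rw [him]
    have : 0 < Real.sqrt |(D:ℝ)| := Real.sqrt_pos.2 (by linarith)
    linarith

lemma cover_arith {re im u v : ℝ} (hre : 0 ≤ re)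
    (hu1 : -(1/2) ≤ u) (hu2 : u ≤ 1/2) (hv1 : -(1/2) ≤ v) (hv2 : v ≤ 1/2) :
    u^2 + 2*u*v*re + v^2*(re^2 + im^2) ≤ ((1 + re)^2 + im^2)/2^2 := by
  have e3 : (0:ℝ) ≤ (1/2-u)*(1/2+v) + (1/2+u)*(1/2-v) :=
    add_nonneg (mul_nonneg (by linarith) (by linarith))
      (mul_nonneg (by linarith) (by linarith))
  have huv : u*v ≤ 1/4 := by nlinarith
  have hu2' : u^2 ≤ 1/4 := by nlinarith
  have hv2' : v^2 ≤ 1/4 := by nlinarith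
  have h1 : v^2*(re^2 + im^2) ≤ (1/4)*(re^2 + im^2) :=
    mul_le_mul_of_nonneg_right hv2' (by positivity)
  have h2 : 2*u*v*re ≤ (1/2)*re := by
    have := mul_le_mul_of_nonneg_right huv hre
    linarith
  nlinarith [h1, h2, hu2']

/-- Every disk of radius `|1+ω|/2` contains a point of `ℤ + ℤω`. -/
lemma cover {ω : ℂ} (him : 0 < ω.im) (hre : 0 ≤ ω.re) (z : ℂ) :
    ∃ a b : ℤ, ‖z - ((a : ℂ) + (b : ℂ) * ω)‖ ≤ ‖1 + ω‖ / 2 := by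
  set y : ℝ := z.im / ω.im with hy
  set x : ℝ := z.re - y * ω.re with hx
  refine ⟨round x, round y, ?_⟩
  set u : ℝ := x - round x with hu'
  set v : ℝ := y - round y with hv'
  have hu := abs_sub_round x
  have hv := abs_sub_round y
  have hu1 : -(1/2) ≤ u ∧ u ≤ 1/2 := abs_le.1 (by exact_mod_cast hu)
  have hv1 : -(1/2) ≤ v ∧ v ≤ 1/2 := abs_le.1 (by exact_mod_cast hv)
  have hz : z - ((round x : ℂ) + (round y : ℂ) * ω) = (u : ℂ) + (v : ℂ) * ω := by
    apply Complex.ext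
    · simp [hu', hv', hx]
      ring
    · simp [hu', hv', hy]
      field_simp
  rw [hz]
  have e1 : (‖(u:ℂ) + (v:ℂ) * ω‖)^2
      = u^2 + 2*u*v*ω.re + v^2*(ω.re^2 + ω.im^2) := by
    rw [Complex.sq_norm, Complex.normSq_apply]
    simp
    ring
  have e2 : (‖1 + ω‖)^2 = (1 + ω.re)^2 + ω.im^2 := by
    rw [Complex.sq_norm, Complex.normSq_apply]
    simp
    ring
  have hsq : (‖(u:ℂ) + (v:ℂ) * ω‖)^2 ≤ (‖1 + ω‖/2)^2 := by
    rw [e1, div_pow, e2]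
    exact cover_arith hre hu1.1 hu1.2 hv1.1 hv1.2
  have := Real.sqrt_le_sqrt hsq
  rwa [Real.sqrt_sq (norm_nonneg _), Real.sqrt_sq (by positivity)] at this

lemma int_one_le_aux1 {a b : ℤ} (h : ¬(a = 0 ∧ b = 0)) : (1:ℤ) ≤ a^2 + b^2 := by
  rcases not_and_or.1 h with ha | hb
  · nlinarith [sq_nonneg b, Int.one_le_abs (show a ≠ 0 from ha), sq_abs a, abs_nonneg a]
  · nlinarith [sq_nonneg a, Int.one_le_abs (show b ≠ 0 from hb), sq_abs b, abs_nonneg b]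

lemma int_one_le_aux2 {a b : ℤ} (h : ¬(a = 0 ∧ b = 0)) : (1:ℤ) ≤ a^2 + a*b + b^2 := by
  have h4 : 1 ≤ (2*a+b)^2 + 3*b^2 := by
    rcases not_and_or.1 h with ha | hb
    · rcases eq_or_ne b 0 with rfl | hb
      · have := Int.one_le_abs (show a ≠ 0 from ha)
        nlinarith [sq_abs a]
      · have := Int.one_le_abs hb
        nlinarith [sq_abs b, sq_nonneg (2*a+b)]
    · have := Int.one_le_abs (show b ≠ 0 from hb)
      nlinarith [sq_abs b, sq_nonneg (2*a+b)]
  have : 0 < a^2 + a*b + b^2 := by nlinarith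
  linarith

lemma abs_ge_one {ω : ℂ}
    (hfacts : 0 < ω.im ∧ ((ω.re = 0 ∧ 1 ≤ ω.im ^ 2) ∨ (ω.re = 1/2 ∧ 3/4 ≤ ω.im ^ 2)))
    {z : ℂ} (a b : ℤ) (hz : z = (a:ℂ) + (b:ℂ) * ω) (hz0 : z ≠ 0) :
    1 ≤ ‖z‖ := by
  obtain ⟨him, hcase⟩ := hfacts
  have hre' : z.re = (a:ℝ) + (b:ℝ) * ω.re := by rw [hz]; simp
  have him' : z.im = (b:ℝ) * ω.im := by rw [hz]; simp
  have hab : ¬(a = 0 ∧ b = 0) := by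
    rintro ⟨rfl, rfl⟩; apply hz0; rw [hz]; simp
  have hsq : (‖z‖)^2 = ((a:ℝ) + (b:ℝ)*ω.re)^2 + ((b:ℝ)*ω.im)^2 := by
    rw [Complex.sq_norm, Complex.normSq_apply, hre', him']; ring
  have h1 : 1 ≤ (‖z‖)^2 := by
    rw [hsq]
    rcases hcase with ⟨hre, h⟩ | ⟨hre, h⟩
    · have hint : (1:ℝ) ≤ (a:ℝ)^2 + (b:ℝ)^2 := by exact_mod_cast int_one_le_aux1 hab
      rw [hre]
      nlinarith [sq_nonneg (b:ℝ), h]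
    · have hint : (1:ℝ) ≤ (a:ℝ)^2 + (a:ℝ)*(b:ℝ) + (b:ℝ)^2 := by
        exact_mod_cast int_one_le_aux2 hab
      rw [hre]
      nlinarith [sq_nonneg (b:ℝ), h]
  nlinarith [norm_nonneg z]

lemma conj_omega {ω : ℂ}
    (hfacts : 0 < ω.im ∧ ((ω.re = 0 ∧ 1 ≤ ω.im ^ 2) ∨ (ω.re = 1/2 ∧ 3/4 ≤ ω.im ^ 2))) :
    (starRingEnd ℂ) ω = -ω ∨ (starRingEnd ℂ) ω = 1 - ω := by
  rcases hfacts.2 with ⟨hre, -⟩ | ⟨hre, -⟩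
  · left; apply Complex.ext <;> simp [hre]
  · right; apply Complex.ext <;> simp [hre] <;> norm_num

/-- Let `O = ℤ[ω]` be the ring of integers of an imaginary quadratic field and
`c = min {|z| : z ∈ O, |z| > 1}`. If `s ≥ 2 ln(|1+ω| c / (c-1))`, then for every
`(p,q) ∈ O²` with `p ≠ 0` and every `δ > 0`, the annulus `A(q/p, e^s/δ, e^{s/2}/|p|)` is
contained in the union of the translates `A(q', e^s/δ, e^{s/2})`, `q' ∈ O`; that is, its
projection to `ℂ/O` is contained in the projection of `A(0, e^s/δ, e^{s/2})`. -/
theorem stmt_9 (O : Subring ℂ) (ω : ℂ) (hω : IsImagQuadOmega ω)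
    (hOω : (O : Set ℂ) = {z | ∃ a b : ℤ, z = a + b * ω})
    (c : ℝ) (hc : IsLeast {x : ℝ | ∃ z ∈ O, 1 < ‖z‖ ∧ ‖z‖ = x} c)
    (s : ℝ) (hs : 2 * Real.log (‖1 + ω‖ * c / (c - 1)) ≤ s)
    (p q : ℂ) (hp : p ∈ O) (hq : q ∈ O) (hp0 : p ≠ 0) (δ : ℝ) (hδ : 0 < δ) :
    {w : ℂ | Real.exp s / δ ≤ ‖w - q / p‖ ∧
        ‖w - q / p‖ ≤ Real.exp (s / 2) / ‖p‖} ⊆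
      {w : ℂ | ∃ q' ∈ O, Real.exp s / δ ≤ ‖w - q'‖ ∧
        ‖w - q'‖ ≤ Real.exp (s / 2)} := by
  have hfacts := omegaFacts hω
  have him := hfacts.1
  have hre0 : 0 ≤ ω.re := by rcases hfacts.2 with ⟨h, -⟩ | ⟨h, -⟩ <;> rw [h] <;> norm_num
  -- membership transfer
  have memO : ∀ x : ℂ, x ∈ O ↔ ∃ a b : ℤ, x = (a:ℂ) + (b:ℂ) * ω := by
    intro x
    constructor
    · intro hx
      have : x ∈ (O : Set ℂ) := hx
      rw [hOω] at this
      exact this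
    · intro hx
      have : x ∈ (O : Set ℂ) := by rw [hOω]; exact hx
      exact this
  -- |1+ω| > 0
  have hA0 : 0 < ‖1 + ω‖ := by
    rw [norm_pos_iff]
    intro h
    have := congrArg Complex.im h
    simp at this
    linarith
  set A : ℝ := ‖1 + ω‖ with hA
  -- conjugation is a self-map of O
  have conj_mem : ∀ x ∈ O, (starRingEnd ℂ) x ∈ O := by
    intro x hx
    obtain ⟨a, b, rfl⟩ := (memO x).1 hx
    have hcx : (starRingEnd ℂ) ((a:ℂ) + (b:ℂ) * ω) = (a:ℂ) + (b:ℂ) * (starRingEnd ℂ) ω := by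
      simp
    rcases conj_omega hfacts with hcj | hcj
    · exact (memO _).2 ⟨a, -b, by rw [hcx, hcj]; push_cast; ring⟩
    · exact (memO _).2 ⟨a + b, -b, by rw [hcx, hcj]; push_cast; ring⟩
  -- |p| ≥ 1
  obtain ⟨ap, bp, hpab⟩ := (memO p).1 hp
  have hp1 : 1 ≤ ‖p‖ := abs_ge_one hfacts ap bp hpab hp0
  intro w hw
  obtain ⟨h1, h2⟩ := hw
  simp only [Set.mem_setOf_eq]
  rcases eq_or_lt_of_le hp1 with hpe | hpgt
  · -- |p| = 1 : q/p = q * conj p ∈ O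
    have hnp : Complex.normSq p = 1 := by
      rw [← Complex.sq_norm, ← hpe]; norm_num
    have hpc : p * (starRingEnd ℂ) p = 1 := by
      rw [Complex.mul_conj, hnp]; norm_num
    have hqp : q / p = q * (starRingEnd ℂ) p := by
      field_simp
      linear_combination (-q) * hpc
    refine ⟨q / p, by rw [hqp]; exact O.mul_mem hq (conj_mem p hp), h1, ?_⟩
    calc ‖w - q / p‖ ≤ Real.exp (s/2) / ‖p‖ := h2
      _ = Real.exp (s/2) := by rw [← hpe, div_one]
  · -- |p| > 1 : use the covering argument
    have hc1 : 1 < c := by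
      obtain ⟨z, hzO, hz1, hzc⟩ := hc.1
      rw [← hzc]; exact hz1
    have hcp : c ≤ ‖p‖ := hc.2 ⟨p, hp, hpgt, rfl⟩
    set E : ℝ := Real.exp (s/2) with hE
    have hE0 : 0 < E := Real.exp_pos _
    -- from hs : A*c/(c-1) ≤ E
    have hM0 : 0 < A * c / (c - 1) := div_pos (mul_pos hA0 (by linarith)) (by linarith)
    have hM : A * c / (c - 1) ≤ E := by
      rw [← Real.exp_log hM0]
      apply Real.exp_le_exp.2
      linarith
    have key : E / c + A ≤ E := by
      have hc0 : (0:ℝ) < c := by linarith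
      have h1' : A * c ≤ E * (c - 1) := (div_le_iff₀ (by linarith)).1 hM
      have h2' : E / c * c = E := div_mul_cancel₀ E (ne_of_gt hc0)
      nlinarith [h1', h2']
    set R : ℝ := Real.exp s / δ with hR
    have hR0 : 0 < R := by positivity
    have hRc : R ≤ E / c := by
      calc R ≤ ‖w - q / p‖ := h1
        _ ≤ E / ‖p‖ := h2
        _ ≤ E / c := by
            apply div_le_div_of_nonneg_left hE0.le (by linarith) hcp
    -- place a disk of radius A/2 centered at distance R + A/2 from w
    obtain ⟨a, b, hab⟩ := cover him hre0 (w + ((R + A/2 : ℝ) : ℂ))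
    set q' : ℂ := (a:ℂ) + (b:ℂ) * ω with hq'
    have hq'O : q' ∈ O := (memO q').2 ⟨a, b, rfl⟩
    have hz0w : ‖(w + ((R + A/2 : ℝ) : ℂ)) - w‖ = R + A/2 := by
      have : (w + ((R + A/2 : ℝ) : ℂ)) - w = ((R + A/2 : ℝ) : ℂ) := by ring
      rw [this, Complex.norm_real, Real.norm_eq_abs, abs_of_pos (by positivity)]
    have tri1 : ‖(w + ((R + A/2 : ℝ) : ℂ)) - w‖
        ≤ ‖(w + ((R + A/2 : ℝ) : ℂ)) - q'‖ + ‖q' - w‖ :=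
      norm_sub_le_norm_sub_add_norm_sub _ _ _
    have tri2 : ‖w - q'‖
        ≤ ‖w - (w + ((R + A/2 : ℝ) : ℂ))‖
          + ‖(w + ((R + A/2 : ℝ) : ℂ)) - q'‖ :=
      norm_sub_le_norm_sub_add_norm_sub _ _ _
    have hmsub : ‖q' - w‖ = ‖w - q'‖ :=
      norm_sub_rev _ _
    have hmsub2 : ‖w - (w + ((R + A/2 : ℝ) : ℂ))‖
        = ‖(w + ((R + A/2 : ℝ) : ℂ)) - w‖ :=
      norm_sub_rev _ _
    refine ⟨q', hq'O, ?_, ?_⟩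
    · rw [hz0w] at tri1
      rw [hmsub] at tri1
      linarith [hab]
    · rw [hmsub2, hz0w] at tri2
      have : ‖w - q'‖ ≤ R + A := by linarith [hab]
      linarith [hRc, key]
end

section
/- Let K be an imaginary quadratic field with 𝒪 = ℤ[ω] and |ω| = 1 (i.e., K = ℚ(i) or ℚ(i√3)). Under the hypotheses of the preceding tail decomposition (f_s(δ) = 1 for 2 ln|ω| = 0 ≤ s ≤ ln(δ/2) and for s ∈ [s_-, s_+] when δ ≥ 4; f_s(δ) = 0 for s ≥ 2 ln δ), the tail T(δ) = 2∫₀^∞ (1-f_s(δ)) e^{-2s} ds satisfies T(δ) = 1/δ⁴ + O(1/δ⁵) as δ → +∞. -/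
open Filter Asymptotics MeasureTheory

private lemma exp2_integral_Ioi (a : ℝ) :
    ∫ s in Set.Ioi a, Real.exp (-2 * s) = Real.exp (-2 * a) / 2 := by
  have hderiv : ∀ x ∈ Set.Ici a,
      HasDerivAt (fun s : ℝ => -(Real.exp (-2 * s) / 2)) (Real.exp (-2 * x)) x := by
    intro x _
    have h1 : HasDerivAt (fun s : ℝ => -2 * s) (-2) x := by
      simpa using (hasDerivAt_id x).const_mul (-2)
    have h2 : HasDerivAt (fun s : ℝ => -(Real.exp (-2 * s) / 2))
        (-(Real.exp (-2 * x) * -2 / 2)) x := ((h1.exp).div_const 2).neg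
    convert h2 using 1
    ring
  have hint : IntegrableOn (fun s : ℝ => Real.exp (-2 * s)) (Set.Ioi a) :=
    exp_neg_integrableOn_Ioi a (by norm_num)
  have htend : Tendsto (fun s : ℝ => -(Real.exp (-2 * s) / 2)) atTop (nhds 0) := by
    have h0 : Tendsto (fun s : ℝ => Real.exp (-2 * s)) atTop (nhds 0) := by
      have : Tendsto (fun s : ℝ => -2 * s) atTop atBot :=
        tendsto_id.const_mul_atTop_of_neg (by norm_num)
      exact Real.tendsto_exp_atBot.comp this
    simpa using (h0.div_const 2).neg
  have := integral_Ioi_of_hasDerivAt_of_tendsto' hderiv hint htend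
  rw [this]; ring

set_option maxHeartbeats 1000000 in
/-- Heavy-tail estimate in the Gaussian/Eisenstein cases (`|ω| = 1`, so `2 ln|ω| = 0`):
under the hypotheses of the tail decomposition (`f_s(δ) = 1` for `0 ≤ s ≤ ln(δ/2)` and for
`s ∈ [s_-, s_+]` when `δ ≥ 4`, where `s_± = 2 ln(δ/2 ± (δ/2)√(1-4/δ))`; `f_s(δ) = 0` for
`s ≥ 2 ln δ`), the tail `T(δ) = 2 ∫₀^∞ (1 - f_s(δ)) e^{-2s} ds` satisfies
`T(δ) = 1/δ⁴ + O(1/δ⁵)` as `δ → +∞`. -/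
theorem stmt_19 (f : ℝ → ℝ → ℝ) (hmeas : Measurable (Function.uncurry f))
    (hrange : ∀ s δ : ℝ, 0 < s → 0 < δ → f s δ ∈ Set.Icc (0 : ℝ) 1)
    (h1 : ∀ δ : ℝ, 4 ≤ δ → ∀ s : ℝ,
      2 * Real.log (δ / 2 - δ / 2 * Real.sqrt (1 - 4 / δ)) ≤ s →
      s ≤ 2 * Real.log (δ / 2 + δ / 2 * Real.sqrt (1 - 4 / δ)) → f s δ = 1)
    (h2 : ∀ s δ : ℝ, 0 ≤ s → s ≤ Real.log (δ / 2) → f s δ = 1)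
    (h3 : ∀ s δ : ℝ, 0 < δ → 2 * Real.log δ ≤ s → f s δ = 0) :
    (fun δ : ℝ =>
        (2 * ∫ s in Set.Ioi (0 : ℝ), (1 - f s δ) * Real.exp (-2 * s)) - 1 / δ ^ 4)
      =O[atTop] fun δ : ℝ => 1 / δ ^ 5 := by
  rw [isBigO_iff]
  refine ⟨128, ?_⟩
  filter_upwards [eventually_ge_atTop (8 : ℝ)] with δ hδ
  have hδ0 : (0 : ℝ) < δ := by linarith
  set r : ℝ := Real.sqrt (1 - 4 / δ) with hr_def
  have hx : (0 : ℝ) ≤ 1 - 4 / δ := by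
    rw [sub_nonneg, div_le_one hδ0]; linarith
  have hr0 : 0 ≤ r := Real.sqrt_nonneg _
  have hr2 : r ^ 2 = 1 - 4 / δ := Real.sq_sqrt hx
  have h4δ : 0 < 4 / δ := by positivity
  have hr1 : r ≤ 1 := by nlinarith
  set A : ℝ := δ / 2 + δ / 2 * r with hA_def
  set B : ℝ := δ / 2 - δ / 2 * r with hB_def
  have hδr1 : δ * r ≤ δ := by nlinarith [mul_le_mul_of_nonneg_left hr1 hδ0.le]
  have hrge : 1 - 4 / δ ≤ r := by nlinarith [mul_nonneg hr0 (by linarith : (0:ℝ) ≤ 1 - r)]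
  have h44 : δ * (4 / δ) = 4 := by field_simp
  have hδr2 : δ - 4 ≤ δ * r := by nlinarith [mul_le_mul_of_nonneg_left hrge hδ0.le]
  have hAδ : A ≤ δ := by rw [hA_def]; linarith
  have hA2 : δ - 2 ≤ A := by rw [hA_def]; linarith
  have hA0 : 0 < A := by linarith
  have hB0 : 0 ≤ B := by rw [hB_def]; linarith
  have hBA : B * A = δ := by
    have h' : B * A = (δ / 2) ^ 2 * (1 - r ^ 2) := by ring
    rw [h', hr2]
    field_simp
    ring
  have hB1 : 1 ≤ B := by nlinarith [hBA, hAδ, hA0]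
  have hB2 : B ≤ 2 := by nlinarith [hBA, hA2, hA0, hB0]
  -- the key log inequalities
  have hsm : 2 * Real.log B ≤ Real.log (δ / 2) := by
    have hlogB : Real.log B ≤ Real.log 2 := Real.log_le_log (by linarith) hB2
    have h4 : Real.log 4 ≤ Real.log (δ / 2) := Real.log_le_log (by norm_num) (by linarith)
    have h24 : (2 : ℝ) * Real.log 2 = Real.log 4 := by
      rw [show (4 : ℝ) = 2 ^ 2 by norm_num, Real.log_pow]; push_cast; ring
    linarith
  have hsp0 : 0 < 2 * Real.log A := by
    have := Real.log_pos (show (1:ℝ) < A by linarith)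
    linarith
  have hspδ : 2 * Real.log A ≤ 2 * Real.log δ :=
    mul_le_mul_of_nonneg_left (Real.log_le_log hA0 hAδ) (by norm_num)
  have hlogδ0 : 0 < 2 * Real.log δ := lt_of_lt_of_le hsp0 hspδ
  -- f = 1 on (0, 2 log A]
  have hf1 : ∀ s ∈ Set.Ioc (0 : ℝ) (2 * Real.log A), f s δ = 1 := by
    intro s hs
    rcases le_or_gt s (Real.log (δ / 2)) with h | h
    · exact h2 s δ hs.1.le h
    · exact h1 δ (by linarith) s (by rw [← hr_def, ← hB_def]; linarith) hs.2
  -- measurability and integrability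
  have hfm : Measurable fun s => f s δ := hmeas.comp (measurable_id.prodMk measurable_const)
  set g : ℝ → ℝ := fun s => (1 - f s δ) * Real.exp (-2 * s) with hg_def
  have hgm : Measurable g :=
    (measurable_const.sub hfm).mul ((measurable_const.mul measurable_id).exp)
  have hgint : IntegrableOn g (Set.Ioi (0 : ℝ)) := by
    refine Integrable.mono (exp_neg_integrableOn_Ioi 0 (show (0:ℝ) < 2 by norm_num))
      hgm.aestronglyMeasurable ?_
    filter_upwards [ae_restrict_mem measurableSet_Ioi] with s hs
    have hrg := hrange s δ hs hδ0
    have he : (0 : ℝ) < Real.exp (-2 * s) := Real.exp_pos _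
    rw [Real.norm_eq_abs, Real.norm_eq_abs, abs_mul]
    have habs : |1 - f s δ| ≤ 1 := by
      rw [abs_le]; constructor <;> [linarith [hrg.2]; linarith [hrg.1]]
    have := mul_le_mul_of_nonneg_right habs (abs_nonneg (Real.exp (-2 * s)))
    linarith
  -- upper bound
  set I : ℝ := ∫ s in Set.Ioi (0 : ℝ), g s with hI_def
  have hsplit : ∀ c : ℝ, 0 < c →
      I = (∫ s in Set.Ioc (0 : ℝ) c, g s) + ∫ s in Set.Ioi c, g s := by
    intro c hc
    rw [hI_def, ← Set.Ioc_union_Ioi_eq_Ioi hc.le]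
    exact setIntegral_union (Set.Ioc_disjoint_Ioi le_rfl) measurableSet_Ioi
      (hgint.mono_set (by rw [← Set.Ioc_union_Ioi_eq_Ioi hc.le]; exact Set.subset_union_left))
      (hgint.mono_set (by rw [← Set.Ioc_union_Ioi_eq_Ioi hc.le]; exact Set.subset_union_right))
  have hupper : I ≤ Real.exp (-2 * (2 * Real.log A)) / 2 := by
    rw [hsplit _ hsp0]
    have hzero : (∫ s in Set.Ioc (0 : ℝ) (2 * Real.log A), g s) = 0 := by
      rw [setIntegral_congr_fun measurableSet_Ioc
        (g := fun _ => (0 : ℝ)) (fun s hs => by simp [hg_def, hf1 s hs])]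
      simp
    have hmono : (∫ s in Set.Ioi (2 * Real.log A), g s)
        ≤ ∫ s in Set.Ioi (2 * Real.log A), Real.exp (-2 * s) := by
      refine setIntegral_mono_on
        (hgint.mono_set (Set.Ioi_subset_Ioi hsp0.le))
        (exp_neg_integrableOn_Ioi _ (by norm_num)) measurableSet_Ioi ?_
      intro s hs
      have hrg := hrange s δ (lt_trans hsp0 hs) hδ0
      have he : (0 : ℝ) < Real.exp (-2 * s) := Real.exp_pos _
      show (1 - f s δ) * Real.exp (-2 * s) ≤ Real.exp (-2 * s)
      nlinarith [hrg.1, hrg.2]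
    rw [exp2_integral_Ioi] at hmono
    linarith
  -- lower bound
  have hlower : Real.exp (-2 * (2 * Real.log δ)) / 2 ≤ I := by
    rw [hsplit _ hlogδ0]
    have hnn : 0 ≤ ∫ s in Set.Ioc (0 : ℝ) (2 * Real.log δ), g s := by
      refine setIntegral_nonneg measurableSet_Ioc ?_
      intro s hs
      have hrg := hrange s δ hs.1 hδ0
      have he : (0 : ℝ) < Real.exp (-2 * s) := Real.exp_pos _
      show 0 ≤ (1 - f s δ) * Real.exp (-2 * s)
      nlinarith [hrg.2]
    have heq : (∫ s in Set.Ioi (2 * Real.log δ), g s)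
        = ∫ s in Set.Ioi (2 * Real.log δ), Real.exp (-2 * s) := by
      refine setIntegral_congr_fun measurableSet_Ioi (fun s hs => ?_)
      show (1 - f s δ) * Real.exp (-2 * s) = Real.exp (-2 * s)
      rw [h3 s δ hδ0 (le_of_lt hs)]
      ring
    rw [heq, exp2_integral_Ioi]
    linarith
  -- convert exponentials
  have hexp : ∀ C : ℝ, 0 < C → Real.exp (-2 * (2 * Real.log C)) = 1 / C ^ 4 := by
    intro C hC
    rw [show (-2 : ℝ) * (2 * Real.log C) = -((4 : ℕ) * Real.log C) by push_cast; ring,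
      ← Real.log_pow, Real.exp_neg, Real.exp_log (pow_pos hC 4), one_div]
  rw [hexp δ hδ0] at hlower
  rw [hexp A hA0] at hupper
  -- final numeric estimate
  have hA4 : 1 / A ^ 4 ≤ 1 / (δ - 2) ^ 4 := by
    apply one_div_le_one_div_of_le (pow_pos (by linarith) 4)
    exact pow_le_pow_left₀ (by linarith) hA2 4
  have hkey : 1 / (δ - 2) ^ 4 ≤ 1 / δ ^ 4 + 128 * (1 / δ ^ 5) := by
    have h' : 1 / (δ - 2) ^ 4 ≤ (δ + 128) / δ ^ 5 := by
      rw [div_le_div_iff₀ (pow_pos (by linarith) 4) (by positivity)]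
      nlinarith [pow_nonneg (by linarith : (0:ℝ) ≤ δ - 8) 4,
        pow_nonneg (by linarith : (0:ℝ) ≤ δ - 8) 3, sq_nonneg (δ - 8),
        (by linarith : (0:ℝ) ≤ δ - 8)]
    have h'' : (δ + 128) / δ ^ 5 = 1 / δ ^ 4 + 128 * (1 / δ ^ 5) := by
      field_simp
    linarith [h'.trans_eq h'']
  have hTle : 2 * I ≤ 1 / (δ - 2) ^ 4 := by linarith
  have hTge : 1 / δ ^ 4 ≤ 2 * I := by linarith
  rw [Real.norm_eq_abs, Real.norm_eq_abs, abs_of_nonneg (by linarith),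
    abs_of_nonneg (by positivity : (0:ℝ) ≤ 1 / δ ^ 5)]
  linarith
end
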